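/- Let a, b, c, d be integers with gcd(a,b) = 1 and gcd(c,d) = 1. Let x, y be integers with a·x + b·y = 1 (Bézout coefficients of a and b). Then gcd(a·d − b·c, c·x + d·y) = 1. -/

import Mathlib

theorem gcd_det_bezout (a b c d x y : ℤ)
    (hab : Int.gcd a b = 1) (hcd : Int.gcd c d = 1)
    (hxy : a * x + b * y = 1) :
    Int.gcd (a * d - b * c) (c * x + d * y) = 1 := by
  rw [← Int.isCoprime_iff_gcd_eq_one]
  rw [← Int.isCoprime_iff_gcd_eq_one] at hcd
  obtain ⟨m, n, hmn⟩ := hcd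
  exact ⟨n * x - m * y, m * a + n * b, by nlinarith [hmn, hxy]⟩
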